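/- Let b₁ ∈ ℝ, b₂ > 0 with b₂² > 4 + 4b₁², and b₃ ∈ ℝ. Define k : ℝ → ℝ by k(s) = 2/(b₂ + √(b₂² − 4 − 4b₁²)·sin(2(s + b₃))). Then the denominator b₂ + √(b₂² − 4 − 4b₁²)·sin(2(s + b₃)) is strictly positive for all s, the function k is positive and non-constant, and k satisfies (3/4)·k'(s)² − (1/2)·k(s)·k''(s) − (1 + b₁²)·k(s)⁴ + k(s)² = 0 for every s ∈ ℝ. -/

import Mathlib

private lemma ode_aux (a b₁ b₂ sn c : ℝ) (hne : b₂ + a * sn ≠ 0) :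
    3 / 4 * (-(4 * a * c) / (b₂ + a * sn) ^ 2) ^ 2
        - 1 / 2 * (2 / (b₂ + a * sn)) *
          ((8 * a * sn * (b₂ + a * sn) ^ 2
            - (-(4 * a * c)) * (2 * (b₂ + a * sn) * (a * (c * 2))))
            / ((b₂ + a * sn) ^ 2) ^ 2)
        - (1 + b₁ ^ 2) * (2 / (b₂ + a * sn)) ^ 4
        + (2 / (b₂ + a * sn)) ^ 2
        = (4 * ((b₂ ^ 2 - 4 - 4 * b₁ ^ 2) - a ^ 2) - 4 * a ^ 2 * (sn ^ 2 + c ^ 2 - 1))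
          / (b₂ + a * sn) ^ 4 := by
  field_simp
  ring

set_option maxHeartbeats 1000000 in
/-- In `S³` (K = 1): `k(s) = 2/(b₂ + √(b₂²−4−4b₁²) sin 2(s+b₃))` with `b₂ > 0`,
`b₂² > 4 + 4b₁²`, has positive denominator, is positive, non-constant and satisfies
`(3/4)k'² − (1/2)k k'' − (1+b₁²)k⁴ + k² = 0`. -/
theorem stmt_11 (b₁ b₂ b₃ : ℝ) (hb₂ : 0 < b₂) (hb : 4 + 4 * b₁ ^ 2 < b₂ ^ 2)
    (k : ℝ → ℝ)
    (hk : k = fun s =>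
      2 / (b₂ + Real.sqrt (b₂ ^ 2 - 4 - 4 * b₁ ^ 2) * Real.sin (2 * (s + b₃)))) :
    (∀ s : ℝ, 0 < b₂ + Real.sqrt (b₂ ^ 2 - 4 - 4 * b₁ ^ 2) * Real.sin (2 * (s + b₃))) ∧
    (∀ s, 0 < k s) ∧ (∃ s t : ℝ, k s ≠ k t) ∧
      ∀ s, 3 / 4 * (deriv k s) ^ 2 - 1 / 2 * k s * deriv (deriv k) s
        - (1 + b₁ ^ 2) * (k s) ^ 4 + (k s) ^ 2 = 0 := by
  have hnn : (0:ℝ) ≤ b₂ ^ 2 - 4 - 4 * b₁ ^ 2 := by nlinarith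
  set a := Real.sqrt (b₂ ^ 2 - 4 - 4 * b₁ ^ 2) with ha
  have ha0 : 0 ≤ a := Real.sqrt_nonneg _
  have ha2 : a ^ 2 = b₂ ^ 2 - 4 - 4 * b₁ ^ 2 := Real.sq_sqrt hnn
  have hapos : 0 < a := Real.sqrt_pos.mpr (by nlinarith)
  have hab : a < b₂ := by nlinarith
  have hDpos : ∀ s : ℝ, 0 < b₂ + a * Real.sin (2 * (s + b₃)) := by
    intro s
    have h1 : -1 ≤ Real.sin (2 * (s + b₃)) := Real.neg_one_le_sin _
    nlinarith
  have hDne : ∀ s : ℝ, b₂ + a * Real.sin (2 * (s + b₃)) ≠ 0 := fun s => (hDpos s).ne'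
  refine ⟨hDpos, ?_, ?_, ?_⟩
  · intro s; rw [hk]; exact div_pos two_pos (hDpos s)
  · refine ⟨Real.pi / 4 - b₃, -(Real.pi / 4) - b₃, ?_⟩
    rw [hk]
    simp only
    have e1 : 2 * (Real.pi / 4 - b₃ + b₃) = Real.pi / 2 := by ring
    have e2 : 2 * (-(Real.pi / 4) - b₃ + b₃) = -(Real.pi / 2) := by ring
    rw [e1, e2, Real.sin_pi_div_two, Real.sin_neg, Real.sin_pi_div_two]
    intro h
    have h1 : b₂ + a * 1 ≠ 0 := by nlinarith
    have h2 : b₂ + a * (-1) ≠ 0 := by nlinarith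
    have h2' : b₂ + -a ≠ 0 := by nlinarith
    field_simp at h
    nlinarith
  · have hlin : ∀ s : ℝ, HasDerivAt (fun s : ℝ => 2 * (s + b₃)) 2 s := by
      intro s
      simpa using ((hasDerivAt_id s).add_const b₃).const_mul 2
    have hD : ∀ s : ℝ, HasDerivAt (fun s => b₂ + a * Real.sin (2 * (s + b₃)))
        (a * (Real.cos (2 * (s + b₃)) * 2)) s := by
      intro s
      exact (((Real.hasDerivAt_sin _).comp s (hlin s)).const_mul a).const_add b₂
    have hk1 : ∀ s : ℝ, HasDerivAt k
        (-(4 * a * Real.cos (2 * (s + b₃))) / (b₂ + a * Real.sin (2 * (s + b₃))) ^ 2) s := by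
      intro s
      rw [hk]
      have := (hasDerivAt_const s (2:ℝ)).div (hD s) (hDne s)
      refine this.congr_deriv ?_
      ring
    have hderiv : deriv k = fun s =>
        -(4 * a * Real.cos (2 * (s + b₃))) / (b₂ + a * Real.sin (2 * (s + b₃))) ^ 2 :=
      funext fun s => (hk1 s).deriv
    have hk2 : ∀ s : ℝ, deriv (deriv k) s =
        (8 * a * Real.sin (2 * (s + b₃)) * (b₂ + a * Real.sin (2 * (s + b₃))) ^ 2
          - (-(4 * a * Real.cos (2 * (s + b₃)))) *
            (2 * (b₂ + a * Real.sin (2 * (s + b₃))) * (a * (Real.cos (2 * (s + b₃)) * 2))))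
          / ((b₂ + a * Real.sin (2 * (s + b₃))) ^ 2) ^ 2 := by
      intro s
      rw [hderiv]
      have hnum : HasDerivAt (fun s => -(4 * a * Real.cos (2 * (s + b₃))))
          (8 * a * Real.sin (2 * (s + b₃))) s := by
        have := (((Real.hasDerivAt_cos _).comp s (hlin s)).const_mul (4*a)).neg
        refine this.congr_deriv ?_; ring
      have hden : HasDerivAt (fun s => (b₂ + a * Real.sin (2 * (s + b₃))) ^ 2)
          (2 * (b₂ + a * Real.sin (2 * (s + b₃))) * (a * (Real.cos (2 * (s + b₃)) * 2))) s := by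
        have := (hD s).pow 2
        refine this.congr_deriv ?_; ring
      exact (hnum.div hden (pow_ne_zero 2 (hDne s))).deriv
    intro s
    rw [hk2 s, hderiv, hk]
    simp only
    have hsc : Real.sin (2 * (s + b₃)) ^ 2 + Real.cos (2 * (s + b₃)) ^ 2 = 1 :=
      Real.sin_sq_add_cos_sq _
    have hne := hDne s
    have key : 3 / 4 * (-(4 * a * Real.cos (2 * (s + b₃))) / (b₂ + a * Real.sin (2 * (s + b₃))) ^ 2) ^ 2
        - 1 / 2 * (2 / (b₂ + a * Real.sin (2 * (s + b₃)))) *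
          ((8 * a * Real.sin (2 * (s + b₃)) * (b₂ + a * Real.sin (2 * (s + b₃))) ^ 2
            - (-(4 * a * Real.cos (2 * (s + b₃)))) *
              (2 * (b₂ + a * Real.sin (2 * (s + b₃))) * (a * (Real.cos (2 * (s + b₃)) * 2))))
            / ((b₂ + a * Real.sin (2 * (s + b₃))) ^ 2) ^ 2)
        - (1 + b₁ ^ 2) * (2 / (b₂ + a * Real.sin (2 * (s + b₃)))) ^ 4
        + (2 / (b₂ + a * Real.sin (2 * (s + b₃)))) ^ 2
        = (4 * ((b₂ ^ 2 - 4 - 4 * b₁ ^ 2) - a ^ 2)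
            - 4 * a ^ 2 * (Real.sin (2 * (s + b₃)) ^ 2 + Real.cos (2 * (s + b₃)) ^ 2 - 1))
          / (b₂ + a * Real.sin (2 * (s + b₃))) ^ 4 :=
      ode_aux a b₁ b₂ _ _ hne
    rw [key, ha2, hsc]
    simp
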